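/- The partial derivative of Φ(d_{t,2}^α) with respect to the asset price s equals Γ·(s + (α/σ)e^{rt})/(Ke^{-rτ} + (α/σ)e^{rt}), where Γ = e^{-(d_{t,1}^α)²/2}/((s + (α/σ)e^{rt})σ√(2πτ)) is the Gamma and τ = T - t. -/

import Mathlib

open Real

/-- Standard normal CDF. -/
noncomputable def Phi (d : ℝ) : ℝ :=
  ∫ u in Set.Iic d, Real.exp (-u ^ 2 / 2) / Real.sqrt (2 * Real.pi)

/-- d_{t,1}^α of the crisis model. -/
noncomputable def d1 (s K σ α r t T : ℝ) : ℝ :=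
  (Real.log ((s + α / σ * Real.exp (r * t)) / (K + α / σ * Real.exp (r * T)))
    + (r + σ ^ 2 / 2) * (T - t)) / (σ * Real.sqrt (T - t))

/-- d_{t,2}^α of the crisis model. -/
noncomputable def d2 (s K σ α r t T : ℝ) : ℝ :=
  d1 s K σ α r t T - σ * Real.sqrt (T - t)

/-- Crisis-model European call price. -/
noncomputable def C (s K σ α r t T : ℝ) : ℝ :=
  (s + α / σ * Real.exp (r * t)) * Phi (d1 s K σ α r t T)
    - (K * Real.exp (-r * (T - t)) + α / σ * Real.exp (r * t)) * Phi (d2 s K σ α r t T)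

open MeasureTheory

private lemma gauss_cont : Continuous (fun u : ℝ => Real.exp (-u ^ 2 / 2) / Real.sqrt (2 * Real.pi)) := by
  fun_prop

private lemma gauss_int : Integrable (fun u : ℝ => Real.exp (-u ^ 2 / 2) / Real.sqrt (2 * Real.pi)) := by
  have h := (integrable_exp_neg_mul_sq (by norm_num : (0:ℝ) < 1/2)).div_const (Real.sqrt (2 * Real.pi))
  convert h using 2 with u
  ring_nf

private lemma hasDerivAt_Phi (p : ℝ) :
    HasDerivAt Phi (Real.exp (-p ^ 2 / 2) / Real.sqrt (2 * Real.pi)) p := by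
  have key : ∀ x : ℝ, Phi x = Phi 0 + ∫ u in (0:ℝ)..x, Real.exp (-u ^ 2 / 2) / Real.sqrt (2 * Real.pi) := by
    intro x
    have := intervalIntegral.integral_Iic_sub_Iic (gauss_int.integrableOn) (gauss_int.integrableOn)
      (a := 0) (b := x) (μ := volume)
    simp only [Phi]
    linarith [this]
  have hD : HasDerivAt (fun x => Phi 0 + ∫ u in (0:ℝ)..x, Real.exp (-u ^ 2 / 2) / Real.sqrt (2 * Real.pi))
      (Real.exp (-p ^ 2 / 2) / Real.sqrt (2 * Real.pi)) p := by
    refine (HasDerivAt.const_add _ ?_)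
    exact intervalIntegral.integral_hasDerivAt_right gauss_int.intervalIntegrable
      gauss_cont.aestronglyMeasurable.stronglyMeasurableAtFilter gauss_cont.continuousAt
  exact hD.congr_of_eventuallyEq (Filter.Eventually.of_forall fun x => (key x))

/-- ∂Φ(d₂)/∂s = Γ·(s + (α/σ)e^{rt})/(Ke^{-rτ} + (α/σ)e^{rt}). -/
theorem dPhi_d2_ds (s K σ α r t T : ℝ)
    (hs : 0 < s) (hK : 0 < K) (hσ : 0 < σ) (hα : 0 ≤ α)
    (ht : 0 ≤ t) (htT : t < T)
    (h1 : 0 < s + α / σ * Real.exp (r * t))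
    (h2 : 0 < K + α / σ * Real.exp (r * T)) :
    HasDerivAt (fun x => Phi (d2 x K σ α r t T))
      (Real.exp (-(d1 s K σ α r t T) ^ 2 / 2) /
          ((s + α / σ * Real.exp (r * t)) * σ * Real.sqrt (2 * Real.pi * (T - t))) *
        (s + α / σ * Real.exp (r * t)) /
        (K * Real.exp (-r * (T - t)) + α / σ * Real.exp (r * t))) s := by
  set a := α / σ * Real.exp (r * t) with ha
  set B := K + α / σ * Real.exp (r * T) with hB
  have hτ : 0 < T - t := sub_pos.mpr htT
  have hsq : 0 < Real.sqrt (T - t) := Real.sqrt_pos.mpr hτ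
  have hsq2 : Real.sqrt (T - t) ^ 2 = T - t := Real.sq_sqrt hτ.le
  have hden2 : 0 < K * Real.exp (-r * (T - t)) + a := by
    have : 0 ≤ a := by positivity
    have : 0 < K * Real.exp (-r * (T - t)) := by positivity
    linarith
  -- derivative of d2 in x
  have hd2 : HasDerivAt (fun x => d2 x K σ α r t T)
      (1 / ((s + a) * (σ * Real.sqrt (T - t)))) s := by
    have hlog : HasDerivAt (fun x : ℝ => Real.log ((x + a) / B))
        ((1 / B) / ((s + a) / B)) s := by
      have hf : HasDerivAt (fun x : ℝ => (x + a) / B) (1 / B) s := by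
        simpa using ((hasDerivAt_id s).add_const a).div_const B
      exact hf.log (by positivity)
    have h := ((hlog.add_const ((r + σ ^ 2 / 2) * (T - t))).div_const
        (σ * Real.sqrt (T - t))).sub_const (σ * Real.sqrt (T - t))
    simp only [d2, d1]
    refine h.congr_deriv (Eq.symm ?_)
    field_simp
  have hPhi := hasDerivAt_Phi (d2 s K σ α r t T)
  have hcomp := hPhi.comp s hd2
  refine hcomp.congr_deriv (Eq.symm ?_)
  -- algebraic identity
  have hd1σ : d1 s K σ α r t T * (σ * Real.sqrt (T - t))
      = Real.log ((s + a) / B) + (r + σ ^ 2 / 2) * (T - t) := by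
    rw [d1, div_mul_cancel₀ _ (by positivity : σ * Real.sqrt (T - t) ≠ 0)]
  have hexp : Real.exp (-(d2 s K σ α r t T) ^ 2 / 2)
      = Real.exp (-(d1 s K σ α r t T) ^ 2 / 2) * ((s + a) / (K * Real.exp (-r * (T - t)) + a)) := by
    have he : -(d2 s K σ α r t T) ^ 2 / 2
        = -(d1 s K σ α r t T) ^ 2 / 2 + (Real.log ((s + a) / B) + r * (T - t)) := by
      rw [d2]; nlinarith [hd1σ, hsq2]
    rw [he, Real.exp_add, Real.exp_add, Real.exp_log (by positivity)]
    have hBD : K * Real.exp (-r * (T - t)) + a = B * Real.exp (-r * (T - t)) := by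
      rw [hB, ha, add_mul, mul_assoc, ← Real.exp_add]
      ring_nf
    have hfrac : (s + a) / B * Real.exp (r * (T - t))
        = (s + a) / (K * Real.exp (-r * (T - t)) + a) := by
      rw [hBD, show -r * (T - t) = -(r * (T - t)) by ring, Real.exp_neg]
      field_simp
    rw [hfrac]
  rw [hexp]
  have hsqrt : Real.sqrt (2 * Real.pi * (T - t)) = Real.sqrt (2 * Real.pi) * Real.sqrt (T - t) :=
    Real.sqrt_mul (by positivity) _
  rw [hsqrt]
  have hpi : 0 < Real.sqrt (2 * Real.pi) := Real.sqrt_pos.mpr (by positivity)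
  field_simp
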